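/- Let v₂(n) denote the largest exponent m ≥ 0 such that 2^m divides n, and let I := {A ⊆ ℕ : for every k ∈ ℕ the set {n ∈ A : v₂(n) = k−1} is finite} (an isomorphic copy of the Fubini product ∅ × Fin on ℕ). Then I ⊆ Z, and consequently I-statistical convergence coincides with statistical convergence. -/

import Mathlib

open Filter Set Topology

/-- `λ_n(A) = |A ∩ [1,n]| / n`. -/
noncomputable def lam (n : ℕ) (A : Set ℕ) : ℝ :=
  ((A ∩ Set.Icc 1 n).ncard : ℝ) / n

/-- The density zero ideal `Z = {A ⊆ ℕ : lim_n λ_n(A) = 0}`. -/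
def Zstat : Set (Set ℕ) :=
  {A : Set ℕ | Tendsto (fun n => lam n A) atTop (nhds 0)}

/-- A (possibly improper) ideal on ℕ: contains all finite sets, closed under
subsets and finite unions. -/
def IsIdeal (I : Set (Set ℕ)) : Prop :=
  (∀ A : Set ℕ, A.Finite → A ∈ I) ∧
    (∀ ⦃A B : Set ℕ⦄, A ⊆ B → B ∈ I → A ∈ I) ∧
    (∀ ⦃A B : Set ℕ⦄, A ∈ I → B ∈ I → A ∪ B ∈ I)

/-- A proper ideal on ℕ. -/
def IsProperIdeal (I : Set (Set ℕ)) : Prop :=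
  IsIdeal I ∧ (Set.univ : Set ℕ) ∉ I

/-- `I`-statistical convergence of a sequence `x` to `l`:
`{n : λ_n({k : x_k ∉ U}) ≥ ε} ∈ I` for every neighborhood `U` of `l` and `ε > 0`. -/
def IStatConv (I : Set (Set ℕ)) {X : Type*} [TopologicalSpace X]
    (x : ℕ → X) (l : X) : Prop :=
  ∀ U ∈ nhds l, ∀ ε : ℝ, 0 < ε → {n : ℕ | ε ≤ lam n {k : ℕ | x k ∉ U}} ∈ I

/-- A copy of the Fubini product `∅ × Fin` on ℕ: the sets `A` such that, for every
`k`, only finitely many `n ∈ A` have 2-adic valuation exactly `k`. -/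
def fubiniIdeal : Set (Set ℕ) :=
  {A : Set ℕ | ∀ k : ℕ, {n : ℕ | n ∈ A ∧ padicValNat 2 n = k}.Finite}

lemma lam_nonneg (n : ℕ) (A : Set ℕ) : 0 ≤ lam n A := by
  unfold lam; positivity

lemma finite_mem_fubini {A : Set ℕ} (hA : A.Finite) : A ∈ fubiniIdeal :=
  fun _k => hA.subset (fun _n hn => hn.1)

lemma fubini_subset_Zstat : fubiniIdeal ⊆ Zstat := by
  intro A hA
  rw [Zstat, Set.mem_setOf_eq, Metric.tendsto_atTop]
  intro ε hε
  obtain ⟨K, hK⟩ := exists_pow_lt_of_lt_one (half_pos hε) (by norm_num : (1:ℝ)/2 < 1)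
  have h2K : (1:ℝ)/(2^K) < ε/2 := by
    have : ((1:ℝ)/2)^K = 1/(2^K) := by rw [div_pow, one_pow]
    linarith [this ▸ hK]
  set F : Set ℕ := ⋃ k : Fin K, {n : ℕ | n ∈ A ∧ padicValNat 2 n = k} with hF
  have hFfin : F.Finite := Set.finite_iUnion (fun k => hA k)
  set C : ℕ := F.ncard with hC
  have hcount : ∀ n : ℕ, (A ∩ Set.Icc 1 n).ncard ≤ C + n / 2^K := by
    intro n
    set M : Set ℕ := {m : ℕ | m ∈ Set.Icc 1 n ∧ 2^K ∣ m} with hM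
    have hMsub : M ⊆ (fun j => 2^K * j) '' (Set.Icc 1 (n / 2^K)) := by
      rintro m ⟨⟨hm1, hmn⟩, hdvd⟩
      refine ⟨m / 2^K, ⟨?_, Nat.div_le_div_right hmn⟩, Nat.mul_div_cancel' hdvd⟩
      have h2 : 2^K ≤ m := Nat.le_of_dvd (by omega) hdvd
      exact (Nat.one_le_div_iff (pow_pos (by norm_num) K)).mpr h2
    have hIfin : (Set.Icc 1 (n / 2^K)).Finite := Set.finite_Icc _ _
    have hMfin : M.Finite := (hIfin.image _).subset hMsub
    have hMcard : M.ncard ≤ n / 2^K := by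
      calc M.ncard ≤ ((fun j => 2^K * j) '' (Set.Icc 1 (n / 2^K))).ncard :=
            Set.ncard_le_ncard hMsub (hIfin.image _)
        _ ≤ (Set.Icc 1 (n / 2^K)).ncard := Set.ncard_image_le hIfin
        _ = n / 2^K := by
            rw [← Finset.coe_Icc, Set.ncard_coe_finset, Nat.card_Icc]
            exact Nat.add_sub_cancel _ _
    have hsub : A ∩ Set.Icc 1 n ⊆ F ∪ M := by
      rintro m ⟨hmA, hm1, hmn⟩
      by_cases hv : padicValNat 2 m < K
      · exact Or.inl (Set.mem_iUnion.mpr ⟨⟨_, hv⟩, hmA, rfl⟩)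
      · push_neg at hv
        exact Or.inr ⟨⟨hm1, hmn⟩, dvd_trans (pow_dvd_pow 2 hv) pow_padicValNat_dvd⟩
    calc (A ∩ Set.Icc 1 n).ncard ≤ (F ∪ M).ncard :=
          Set.ncard_le_ncard hsub (hFfin.union hMfin)
      _ ≤ C + M.ncard := Set.ncard_union_le F M
      _ ≤ C + n / 2^K := by omega
  have hCn : Tendsto (fun n : ℕ => (C : ℝ) / n) atTop (nhds 0) :=
    tendsto_const_div_atTop_nhds_zero_nat (C:ℝ)
  have hhalf : (0:ℝ) < ε/2 - 1/(2^K:ℝ) := by linarith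
  obtain ⟨N, hN⟩ := (Metric.tendsto_atTop.mp hCn) (ε/2 - 1/(2^K:ℝ)) hhalf
  refine ⟨max N 1, fun n hn => ?_⟩
  have hn1 : 1 ≤ n := le_trans (le_max_right N 1) hn
  have hnN : N ≤ n := le_trans (le_max_left N 1) hn
  have hnpos : (0:ℝ) < n := by exact_mod_cast hn1
  have hCn' : (C:ℝ)/n < ε/2 - 1/(2^K:ℝ) := by
    have := hN n hnN
    rw [Real.dist_eq, sub_zero, abs_of_nonneg (by positivity)] at this
    exact this
  have hb : lam n A ≤ (C:ℝ)/n + 1/(2^K:ℝ) := by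
    have h1 : ((A ∩ Set.Icc 1 n).ncard : ℝ) ≤ (C : ℝ) + ((n / 2^K : ℕ) : ℝ) := by
      exact_mod_cast hcount n
    have h2 : ((n / 2^K : ℕ) : ℝ) ≤ (n : ℝ) / (2^K : ℝ) := by
      exact_mod_cast Nat.cast_div_le
    have h3 : lam n A ≤ ((C:ℝ) + (n:ℝ)/(2^K:ℝ)) / n := by
      unfold lam
      gcongr
      linarith
    have h4 : ((C:ℝ) + (n:ℝ)/(2^K:ℝ)) / n = (C:ℝ)/n + 1/(2^K:ℝ) := by
      rw [add_div]
      congr 1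
      rw [div_div, div_eq_div_iff (by positivity) (by positivity)]
      ring
    rw [h4] at h3
    exact h3
  rw [Real.dist_eq, sub_zero, abs_of_nonneg (lam_nonneg n A)]
  linarith

lemma key_finite {B : Set ℕ} {ε : ℝ} (hε : 0 < ε)
    (hS : {n : ℕ | ε/2 ≤ lam n B} ∈ Zstat) : {n : ℕ | ε ≤ lam n B}.Finite := by
  by_contra hinf
  have hinf : {n : ℕ | ε ≤ lam n B}.Infinite := hinf
  set S : Set ℕ := {n : ℕ | ε/2 ≤ lam n B} with hSdef
  obtain ⟨N, hN⟩ := (Metric.tendsto_atTop.mp hS) (1/2) (by norm_num)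
  obtain ⟨n, hnT, hnN⟩ := hinf.exists_gt (max N 1)
  have hn1 : 1 ≤ n := lt_of_le_of_lt (le_max_right N 1) hnN |>.le
  have hnN' : N ≤ 2 * n := le_trans (le_trans (le_max_left N 1) hnN.le) (by omega)
  have hnpos : (0:ℝ) < n := by exact_mod_cast hn1
  -- Icc n (2n) ⊆ S
  have hIcc : Set.Icc n (2*n) ⊆ S := by
    intro m ⟨hm1, hm2⟩
    have hmpos : (0:ℝ) < m := by
      have : 1 ≤ m := le_trans hn1 hm1
      exact_mod_cast this
    have hcm : ((B ∩ Set.Icc 1 n).ncard : ℝ) ≤ ((B ∩ Set.Icc 1 m).ncard : ℝ) := by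
      exact_mod_cast Set.ncard_le_ncard
        (Set.inter_subset_inter_right _ (Set.Icc_subset_Icc le_rfl hm1))
        ((Set.finite_Icc 1 m).inter_of_right _)
    have hεn : ε * n ≤ ((B ∩ Set.Icc 1 n).ncard : ℝ) := by
      have := hnT
      rw [Set.mem_setOf_eq] at this
      unfold lam at this
      rw [le_div_iff₀ hnpos] at this
      linarith
    show ε/2 ≤ lam m B
    unfold lam
    rw [le_div_iff₀ hmpos]
    have hm2' : (m:ℝ) ≤ 2*n := by exact_mod_cast hm2
    calc ε/2 * m ≤ ε/2 * (2*n) := by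
          apply mul_le_mul_of_nonneg_left hm2' (by linarith)
      _ = ε * n := by ring
      _ ≤ ((B ∩ Set.Icc 1 n).ncard : ℝ) := hεn
      _ ≤ _ := hcm
  -- lam (2n) S ≥ (n+1)/(2n) > 1/2
  have hcard : n + 1 ≤ (S ∩ Set.Icc 1 (2*n)).ncard := by
    have hsub : Set.Icc n (2*n) ⊆ S ∩ Set.Icc 1 (2*n) := fun m hm =>
      ⟨hIcc hm, le_trans hn1 hm.1, hm.2⟩
    have h1 := Set.ncard_le_ncard hsub ((Set.finite_Icc 1 (2*n)).inter_of_right _)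
    have h2 : (Set.Icc n (2*n)).ncard = n + 1 := by
      rw [← Finset.coe_Icc, Set.ncard_coe_finset, Nat.card_Icc]; omega
    omega
  have hlow : ((n:ℝ)+1) / (2*(n:ℝ)) ≤ lam (2*n) S := by
    unfold lam
    have hcast : ((2*n : ℕ) : ℝ) = 2*(n:ℝ) := by push_cast; ring
    rw [hcast]
    gcongr
    exact_mod_cast hcard
  have hdist := hN (2*n) hnN'
  rw [Real.dist_eq, sub_zero, abs_of_nonneg (lam_nonneg _ _)] at hdist
  have : ((n:ℝ)+1) / (2*(n:ℝ)) > 1/2 := by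
    rw [gt_iff_lt, div_lt_div_iff₀ (by norm_num) (by linarith)]
    linarith
  linarith

/-- the copy of `∅ × Fin` above is contained in `Z`, and consequently
its statistical convergence coincides with statistical convergence. -/
theorem stmt_9 {X : Type*} [TopologicalSpace X] [T2Space X]
    (x : ℕ → X) (l : X) :
    fubiniIdeal ⊆ Zstat ∧
      (IStatConv fubiniIdeal x l ↔ ∀ U ∈ nhds l, {k : ℕ | x k ∉ U} ∈ Zstat) := by
  refine ⟨fubini_subset_Zstat, ?_, ?_⟩
  · intro h U hU
    rw [Zstat, Set.mem_setOf_eq, Metric.tendsto_atTop]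
    intro ε hε
    have hfin : {n : ℕ | ε ≤ lam n {k : ℕ | x k ∉ U}}.Finite :=
      key_finite hε (fubini_subset_Zstat (h U hU (ε/2) (half_pos hε)))
    obtain ⟨N, hN⟩ := eventually_atTop.mp
      (Nat.cofinite_eq_atTop ▸ hfin.eventually_cofinite_notMem)
    refine ⟨N, fun n hn => ?_⟩
    rw [Real.dist_eq, sub_zero, abs_of_nonneg (lam_nonneg _ _)]
    have := hN n hn
    rw [Set.mem_setOf_eq] at this
    linarith [not_le.mp this]
  · intro h U hU ε hε
    have := h U hU
    rw [Zstat, Set.mem_setOf_eq] at this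
    have hev : ∀ᶠ n in atTop, lam n {k : ℕ | x k ∉ U} < ε :=
      this.eventually_lt_const hε
    apply finite_mem_fubini
    rw [← Nat.cofinite_eq_atTop] at hev
    have := Filter.eventually_cofinite.mp (hev.mono fun n hn => not_le.mpr hn)
    exact this.subset fun n hn => not_not.mpr hn
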